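/- Let F be a field of characteristic not 2, and let R be the polynomial ring over F in the nine variables a,b,c,x,y,z,u,v,w of the 3×3 matrix M = [[a,b,c],[x,y,z],[u,v,w]]. Let I = P_2(M) be the ideal generated by all nine 2×2 subpermanents of M. Then a·y·w² ∈ I. -/
import Mathlib


open MvPolynomial

/-- `R = F[a,b,c,x,y,z,u,v,w]` is the polynomial ring in the entries of the
generic 3×3 matrix `M = [[a,b,c],[x,y,z],[u,v,w]]`, with entry `(i,j)` the
variable `X (i,j)`.  `I = P₂(M)` is generated by all nine 2×2 subpermanents.
Then `a·y·w² ∈ I`. -/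
theorem ayw_sq_mem_permanental_ideal (F : Type*) [Field F] (h2 : (2 : F) ≠ 0) :
    (X (0, 0) * X (1, 1) * X (2, 2) ^ 2 : MvPolynomial (Fin 3 × Fin 3) F) ∈
      Ideal.span {f : MvPolynomial (Fin 3 × Fin 3) F |
        ∃ i k j l : Fin 3, i < k ∧ j < l ∧
          f = X (i, j) * X (k, l) + X (k, j) * X (i, l)} := by
  set S : Set (MvPolynomial (Fin 3 × Fin 3) F) :=
    {f : MvPolynomial (Fin 3 × Fin 3) F |
        ∃ i k j l : Fin 3, i < k ∧ j < l ∧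
          f = X (i, j) * X (k, l) + X (k, j) * X (i, l)} with hS
  have mem : ∀ i k j l : Fin 3, i < k → j < l →
      (X (i, j) * X (k, l) + X (k, j) * X (i, l) : MvPolynomial (Fin 3 × Fin 3) F)
        ∈ Ideal.span S := fun i k j l hik hjl =>
    Ideal.subset_span ⟨i, k, j, l, hik, hjl, rfl⟩
  have g1 := mem 0 1 0 1 (by decide) (by decide)
  have g5 := mem 0 2 0 2 (by decide) (by decide)
  have g6 := mem 0 2 1 2 (by decide) (by decide)
  have g8 := mem 1 2 0 2 (by decide) (by decide)
  have g9 := mem 1 2 1 2 (by decide) (by decide)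
  have key : (2 : MvPolynomial (Fin 3 × Fin 3) F) *
      (X (0, 0) * X (1, 1) * X (2, 2) ^ 2) ∈ Ideal.span S := by
    have hEq : (2 : MvPolynomial (Fin 3 × Fin 3) F) *
        (X (0, 0) * X (1, 1) * X (2, 2) ^ 2) =
        (X (1, 1) * X (2, 2)) * (X (0, 0) * X (2, 2) + X (2, 0) * X (0, 2))
        - (X (2, 0) * X (0, 2)) * (X (1, 1) * X (2, 2) + X (2, 1) * X (1, 2))
        + (X (2, 1) * X (0, 2)) * (X (1, 0) * X (2, 2) + X (2, 0) * X (1, 2))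
        - (X (1, 0) * X (2, 2)) * (X (0, 1) * X (2, 2) + X (2, 1) * X (0, 2))
        + (X (2, 2) ^ 2) * (X (0, 0) * X (1, 1) + X (1, 0) * X (0, 1)) := by
      ring
    rw [hEq]
    exact Ideal.add_mem _ (Ideal.sub_mem _ (Ideal.add_mem _ (Ideal.sub_mem _
      (Ideal.mul_mem_left _ _ g5) (Ideal.mul_mem_left _ _ g9))
      (Ideal.mul_mem_left _ _ g8)) (Ideal.mul_mem_left _ _ g6))
      (Ideal.mul_mem_left _ _ g1)
  have hhalf : (X (0, 0) * X (1, 1) * X (2, 2) ^ 2 : MvPolynomial (Fin 3 × Fin 3) F) =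
      C ((2 : F)⁻¹) * ((2 : MvPolynomial (Fin 3 × Fin 3) F) *
        (X (0, 0) * X (1, 1) * X (2, 2) ^ 2)) := by
    rw [← mul_assoc]
    have : (C ((2 : F)⁻¹) : MvPolynomial (Fin 3 × Fin 3) F) * 2 = 1 := by
      have h22 : (2 : MvPolynomial (Fin 3 × Fin 3) F) = C (2 : F) := by
        simp [map_ofNat]
      rw [h22, ← C_mul, inv_mul_cancel₀ h2, C_1]
    rw [this, one_mul]
  rw [hhalf]
  exact Ideal.mul_mem_left _ _ key
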